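/- Let δ ∈ (0, π/4) and κ > 0. If |z0|² ≥ κ/(√2·(π/4 - δ)·sin δ), then the solution of the planar system z' = z̄(1 + |z|² e^{iκt}) with z(0) = z0 blows up in finite time either forwards or backwards in time: either |x(t)| → ∞ forward in finite time or |y(t)| → ∞ backward in finite time. -/

import Mathlib

open Real Set


lemma riccati (a L : ℝ) (hL : 0 < L) (v : ℝ → ℝ)
    (hd : ∀ t ∈ Icc (0:ℝ) L, ∃ d, HasDerivAt v d t ∧ a * (v t)^2 ≤ d)
    (hv0 : 0 < v 0) (hbig : 1 ≤ a * v 0 * L) : False := by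
  have ha : 0 < a := by nlinarith [sq_nonneg (v 0), mul_pos hv0 hL]
  have hcont : ContinuousOn v (Icc 0 L) := fun t ht =>
    ((hd t ht).choose_spec.1.continuousAt).continuousWithinAt
  have hmono : MonotoneOn v (Icc 0 L) := by
    apply monotoneOn_of_deriv_nonneg (convex_Icc 0 L) hcont
    · intro t ht
      rw [interior_Icc] at ht
      exact ((hd t (Ioo_subset_Icc_self ht)).choose_spec.1.differentiableAt).differentiableWithinAt
    · intro t ht
      rw [interior_Icc] at ht
      obtain ⟨d, hdv, hge⟩ := hd t (Ioo_subset_Icc_self ht)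
      rw [hdv.deriv]
      exact le_trans (by positivity) hge
  have hvpos : ∀ t ∈ Icc (0:ℝ) L, 0 < v t := fun t ht =>
    lt_of_lt_of_le hv0 (hmono (left_mem_Icc.mpr hL.le) ht ht.1)
  set h : ℝ → ℝ := fun t => (v t)⁻¹ + a * t with hh
  have hanti : AntitoneOn h (Icc 0 L) := by
    apply antitoneOn_of_deriv_nonpos (convex_Icc 0 L)
    · exact (hcont.inv₀ (fun t ht => (hvpos t ht).ne')).add
        ((continuous_const.mul continuous_id).continuousOn)
    · intro t ht
      rw [interior_Icc] at ht
      have htI := Ioo_subset_Icc_self ht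
      obtain ⟨d, hdv, hge⟩ := hd t htI
      exact ((hdv.inv (hvpos t htI).ne').add
        ((hasDerivAt_id t).const_mul a)).differentiableAt.differentiableWithinAt
    · intro t ht
      rw [interior_Icc] at ht
      have htI := Ioo_subset_Icc_self ht
      obtain ⟨d, hdv, hge⟩ := hd t htI
      have hv := hvpos t htI
      have hder : HasDerivAt h (-d / (v t)^2 + a * 1) t :=
        (hdv.inv hv.ne').add ((hasDerivAt_id t).const_mul a)
      rw [hder.deriv]
      have h2 : a ≤ d / (v t)^2 := (le_div_iff₀ (by positivity)).mpr (by linarith)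
      rw [neg_div]
      linarith
  have hmem0 : (0:ℝ) ∈ Icc (0:ℝ) L := left_mem_Icc.mpr hL.le
  have hmemL : L ∈ Icc (0:ℝ) L := right_mem_Icc.mpr hL.le
  have hLe := hanti hmem0 hmemL hL.le
  have h0 : h 0 = (v 0)⁻¹ := by simp [hh]
  have hvL : 0 < v L := hvpos L hmemL
  have hinv : (v 0)⁻¹ ≤ a * L := by
    rw [inv_le_iff_one_le_mul₀ hv0]
    nlinarith
  have : (v L)⁻¹ + a * L ≤ a * L := by
    calc (v L)⁻¹ + a * L = h L := rfl
    _ ≤ h 0 := hLe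
    _ ≤ a * L := by rw [h0]; exact hinv
  have : (v L)⁻¹ ≤ 0 := by linarith
  exact absurd this (not_le.mpr (inv_pos.mpr hvL))


set_option maxHeartbeats 1000000 in
lemma forward (δ κ x0 y0 : ℝ) (hδ : δ ∈ Set.Ioo 0 (Real.pi / 4)) (hκ : 0 < κ)
    (hbig : x0 ^ 2 + y0 ^ 2 ≥ κ / (Real.sqrt 2 * (Real.pi / 4 - δ) * Real.sin δ))
    (hcone : y0 ^ 2 ≤ x0 ^ 2)
    (x y : ℝ → ℝ) (hx0 : x 0 = x0) (hy0 : y 0 = y0)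
    (hode : ∀ t ∈ Icc (0:ℝ) ((Real.pi / 4 - δ) / κ),
      HasDerivAt x
        (x t * (1 + Real.cos (κ * t) * ((x t) ^ 2 + (y t) ^ 2)) +
          Real.sin (κ * t) * ((x t) ^ 2 + (y t) ^ 2) * y t) t ∧
      HasDerivAt y
        (-(y t) * (1 + Real.cos (κ * t) * ((x t) ^ 2 + (y t) ^ 2)) +
          Real.sin (κ * t) * ((x t) ^ 2 + (y t) ^ 2) * x t) t) :
    False := by
  obtain ⟨hδ0, hδπ⟩ := hδ
  have hπ := Real.pi_pos
  set L : ℝ := (Real.pi / 4 - δ) / κ with hLdef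
  have hL : 0 < L := div_pos (by linarith) hκ
  have hsδ : 0 < Real.sin δ := Real.sin_pos_of_pos_of_lt_pi hδ0 (by linarith)
  have hs2 : (0:ℝ) < Real.sqrt 2 := by positivity
  have hden : 0 < Real.sqrt 2 * (Real.pi / 4 - δ) * Real.sin δ :=
    mul_pos (mul_pos hs2 (by linarith)) hsδ
  have hBpos : 0 < κ / (Real.sqrt 2 * (Real.pi / 4 - δ) * Real.sin δ) := div_pos hκ hden
  have hw0 : 0 < x0 ^ 2 + y0 ^ 2 := lt_of_lt_of_le hBpos hbig
  have hx0pos : 0 < x0 ^ 2 := by linarith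
  -- angle facts
  have hangle : ∀ t ∈ Icc (0:ℝ) L, 0 ≤ κ * t ∧ κ * t ≤ Real.pi / 4 - δ := by
    intro t ht
    constructor
    · exact mul_nonneg hκ.le ht.1
    · calc κ * t ≤ κ * L := by nlinarith [ht.2]
      _ = Real.pi / 4 - δ := by rw [hLdef]; field_simp
  have hcosnn : ∀ t ∈ Icc (0:ℝ) L, 0 ≤ Real.cos (κ * t) := by
    intro t ht
    obtain ⟨h1, h2⟩ := hangle t ht
    exact Real.cos_nonneg_of_mem_Icc ⟨by linarith, by linarith⟩
  have hsinnn : ∀ t ∈ Icc (0:ℝ) L, 0 ≤ Real.sin (κ * t) := by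
    intro t ht
    obtain ⟨h1, h2⟩ := hangle t ht
    exact Real.sin_nonneg_of_nonneg_of_le_pi h1 (by linarith)
  have hcs : ∀ t ∈ Icc (0:ℝ) L,
      Real.sqrt 2 * Real.sin δ ≤ Real.cos (κ * t) - Real.sin (κ * t) := by
    intro t ht
    obtain ⟨h1, h2⟩ := hangle t ht
    have hc : Real.cos (Real.pi / 4 - δ) ≤ Real.cos (κ * t) :=
      Real.cos_le_cos_of_nonneg_of_le_pi h1 (by linarith) h2
    have hs : Real.sin (κ * t) ≤ Real.sin (Real.pi / 4 - δ) := by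
      apply Real.strictMonoOn_sin.monotoneOn ⟨by linarith, by linarith⟩
        ⟨by linarith, by linarith⟩ h2
    have hid : Real.cos (Real.pi / 4 - δ) - Real.sin (Real.pi / 4 - δ)
        = Real.sqrt 2 * Real.sin δ := by
      rw [Real.cos_sub, Real.sin_sub, Real.cos_pi_div_four, Real.sin_pi_div_four]
      ring
    linarith
  -- cone invariance
  have hconet : ∀ t ∈ Icc (0:ℝ) L, (y t) ^ 2 ≤ (x t) ^ 2 := by
    have hu : ∀ t ∈ Icc (0:ℝ) L, ∃ d, HasDerivAt (fun t => (x t)^2 - (y t)^2) d t ∧ 0 ≤ d := by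
      intro t ht
      obtain ⟨hx', hy'⟩ := hode t ht
      refine ⟨_, ((hx'.pow 2).sub (hy'.pow 2)), ?_⟩
      have hc := hcosnn t ht
      have e : ((2:ℕ):ℝ) * x t ^ (2-1) *
          (x t * (1 + Real.cos (κ * t) * ((x t) ^ 2 + (y t) ^ 2)) +
          Real.sin (κ * t) * ((x t) ^ 2 + (y t) ^ 2) * y t)
        - ((2:ℕ):ℝ) * y t ^ (2-1) *
          (-(y t) * (1 + Real.cos (κ * t) * ((x t) ^ 2 + (y t) ^ 2)) +
          Real.sin (κ * t) * ((x t) ^ 2 + (y t) ^ 2) * x t)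
        = 2 * ((x t)^2 + (y t)^2) * (1 + Real.cos (κ * t) * ((x t)^2 + (y t)^2)) := by
        push_cast
        ring
      rw [e]
      have Q1 : (0:ℝ) ≤ (x t)^2 + (y t)^2 := by positivity
      have Q2 : 0 ≤ Real.cos (κ * t) * ((x t)^2 + (y t)^2)^2 :=
        mul_nonneg hc (sq_nonneg _)
      nlinarith [Q1, Q2]
    have hcont : ContinuousOn (fun t => (x t)^2 - (y t)^2) (Icc 0 L) := fun t ht =>
      ((hu t ht).choose_spec.1.continuousAt).continuousWithinAt
    have hmono : MonotoneOn (fun t => (x t)^2 - (y t)^2) (Icc 0 L) := by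
      apply monotoneOn_of_deriv_nonneg (convex_Icc 0 L) hcont
      · intro t ht
        rw [interior_Icc] at ht
        exact ((hu t (Ioo_subset_Icc_self ht)).choose_spec.1.differentiableAt).differentiableWithinAt
      · intro t ht
        rw [interior_Icc] at ht
        obtain ⟨d, hdv, hge⟩ := hu t (Ioo_subset_Icc_self ht)
        rw [hdv.deriv]; exact hge
    intro t ht
    have := hmono (left_mem_Icc.mpr hL.le) ht ht.1
    simp only [hx0, hy0] at this
    linarith
  -- Riccati on v = x^2
  apply riccati (2 * Real.sqrt 2 * Real.sin δ) L hL (fun t => (x t)^2)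
  · intro t ht
    obtain ⟨hx', _⟩ := hode t ht
    refine ⟨_, hx'.pow 2, ?_⟩
    have hc := hconet t ht
    have hs := hsinnn t ht
    have hcsb := hcs t ht
    have hxy : -(x t)^2 ≤ x t * y t := by nlinarith [sq_nonneg (x t + y t)]
    have hw : (x t)^2 ≤ (x t)^2 + (y t)^2 := by nlinarith [sq_nonneg (y t)]
    have hwnn : (0:ℝ) ≤ (x t)^2 + (y t)^2 := by positivity
    have P1 : 0 ≤ Real.sin (κ * t) * ((x t)^2 + (y t)^2) * (x t * y t + (x t)^2) :=
      mul_nonneg (mul_nonneg hs hwnn) (by linarith)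
    have P2 : 0 ≤ (Real.cos (κ * t) - Real.sin (κ * t) - Real.sqrt 2 * Real.sin δ)
        * (((x t)^2 + (y t)^2) * (x t)^2) :=
      mul_nonneg (by linarith) (mul_nonneg hwnn (sq_nonneg _))
    have P3 : 0 ≤ Real.sqrt 2 * Real.sin δ * ((((x t)^2 + (y t)^2) - (x t)^2) * (x t)^2) :=
      mul_nonneg (mul_nonneg hs2.le hsδ.le) (mul_nonneg (by linarith) (sq_nonneg _))
    have e : ((2:ℕ):ℝ) * x t ^ (2-1) *
        (x t * (1 + Real.cos (κ * t) * ((x t) ^ 2 + (y t) ^ 2)) +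
          Real.sin (κ * t) * ((x t) ^ 2 + (y t) ^ 2) * y t)
      = 2 * (x t)^2 + 2 * Real.cos (κ * t) * ((x t)^2 + (y t)^2) * (x t)^2
        + 2 * (Real.sin (κ * t) * ((x t)^2 + (y t)^2) * (x t * y t)) := by
      push_cast; ring
    rw [e]
    linarith [P1, P2, P3, sq_nonneg (x t)]
  · simpa [hx0] using hx0pos
  · have h1 : κ ≤ (x0^2 + y0^2) * (Real.sqrt 2 * (Real.pi / 4 - δ) * Real.sin δ) :=
      (div_le_iff₀ (by positivity)).mp hbig
    show (1:ℝ) ≤ 2 * Real.sqrt 2 * Real.sin δ * (x 0)^2 * L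
    rw [hx0, hLdef, show 2 * Real.sqrt 2 * Real.sin δ * x0^2 * ((Real.pi / 4 - δ) / κ)
      = (2 * Real.sqrt 2 * Real.sin δ * x0^2 * (Real.pi / 4 - δ)) / κ by ring,
      le_div_iff₀ hκ, one_mul]
    have P : 0 ≤ (x0^2 - y0^2) * (Real.sqrt 2 * (Real.pi / 4 - δ) * Real.sin δ) :=
      mul_nonneg (sub_nonneg.mpr hcone) hden.le
    linarith [h1, P]

/-- For large initial data the solution of the planar system blows up in finite
time forwards or backwards: there is a finite T such that no solution with the
given initial condition exists on all of [-T, T]. -/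
theorem stmt_17 (δ κ x0 y0 : ℝ) (hδ : δ ∈ Set.Ioo 0 (Real.pi / 4)) (hκ : 0 < κ)
    (hbig : x0 ^ 2 + y0 ^ 2 ≥ κ / (Real.sqrt 2 * (Real.pi / 4 - δ) * Real.sin δ)) :
    ∃ T > (0 : ℝ), ¬ ∃ x y : ℝ → ℝ, x 0 = x0 ∧ y 0 = y0 ∧
      ∀ t ∈ Set.Icc (-T) T,
        HasDerivAt x
          (x t * (1 + Real.cos (κ * t) * ((x t) ^ 2 + (y t) ^ 2)) +
            Real.sin (κ * t) * ((x t) ^ 2 + (y t) ^ 2) * y t) t ∧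
        HasDerivAt y
          (-(y t) * (1 + Real.cos (κ * t) * ((x t) ^ 2 + (y t) ^ 2)) +
            Real.sin (κ * t) * ((x t) ^ 2 + (y t) ^ 2) * x t) t := by
  have hπ := Real.pi_pos
  obtain ⟨hδ0, hδπ⟩ := hδ
  set T : ℝ := (Real.pi / 4 - δ) / κ with hT
  have hTpos : 0 < T := div_pos (by linarith) hκ
  refine ⟨T, hTpos, ?_⟩
  rintro ⟨x, y, hx0, hy0, hode⟩
  have hsub : Icc (0:ℝ) T ⊆ Icc (-T) T := Icc_subset_Icc (by linarith) le_rfl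
  by_cases hcone : y0 ^ 2 ≤ x0 ^ 2
  · exact forward δ κ x0 y0 ⟨hδ0, hδπ⟩ hκ hbig hcone x y hx0 hy0
      (fun t ht => hode t (hsub ht))
  · push_neg at hcone
    -- time reversal: X t = y (-t), Y t = x (-t)
    apply forward δ κ y0 x0 ⟨hδ0, hδπ⟩ hκ (by linarith) hcone.le
      (fun t => y (-t)) (fun t => x (-t)) (by simpa using hy0) (by simpa using hx0)
    intro t ht
    have hmem : -t ∈ Icc (-T) T := ⟨by linarith [ht.2], by linarith [ht.1, hTpos]⟩
    obtain ⟨hx', hy'⟩ := hode (-t) hmem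
    have hneg : HasDerivAt (fun s : ℝ => -s) (-1 : ℝ) t := (hasDerivAt_id t).neg
    constructor
    · have h1 := hy'.comp t hneg
      refine h1.congr_deriv ?_
      simp only [mul_neg, Real.cos_neg, Real.sin_neg]
      ring
    · have h1 := hx'.comp t hneg
      refine h1.congr_deriv ?_
      simp only [mul_neg, Real.cos_neg, Real.sin_neg]
      ring
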